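/- An R-submodule W of 𝒟 is L_d^1-admissible if and only if it is G_d-admissible. In particular, for τ = 1, condition (3) of L_d^1-admissibility (W_n ∩ V_n^i ⊆ W_{n−e_i}) is equivalent, given conditions (1) and (2), to the G_d condition ann_R⟨H_{n−e_i}⟩ ∘ H_n = ⟨H_{n−(n_i−1)e_i}⟩ for all i and n − e_i > 0. -/

import Mathlib

open MvPolynomial
open scoped Classical

noncomputable section

variable {m : ℕ} {K : Type*} [Field K]

/-- The divided power module `𝒟 = K_DP[X₁,…,X_m]`, realized as finitely supported
coefficient functions on monomials in the dual variables. -/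
abbrev DP (m : ℕ) (K : Type*) [Field K] : Type _ := (Fin m →₀ ℕ) →₀ K

/-- Contraction action of a polynomial on the divided power module:
`x^a ∘ X^b = X^(b-a)` if `a ≤ b` componentwise, and `0` otherwise. -/
def contract (f : MvPolynomial (Fin m) K) (F : DP m K) : DP m K :=
  ∑ a ∈ f.support, F.sum fun b x =>
    if a ≤ b then Finsupp.single (b - a) (MvPolynomial.coeff a f * x) else 0

/-- Total degree of a monomial exponent. -/
def mdeg (b : Fin m →₀ ℕ) : ℕ := b.sum fun _ e => e

/-- Degree of an element of the divided power module. -/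
def DPdeg (F : DP m K) : ℕ := F.support.sup mdeg

/-- Top degree form of an element of the divided power module. -/
def topForm (F : DP m K) : DP m K := F.filter fun b => mdeg b = DPdeg F

/-- A subset of `𝒟` which is an `R`-submodule under the contraction action. -/
def IsDPSubmodule (W : Set (DP m K)) : Prop :=
  (0 : DP m K) ∈ W ∧ (∀ F G, F ∈ W → G ∈ W → F + G ∈ W) ∧
    (∀ (c : K), ∀ F, F ∈ W → c • F ∈ W) ∧
    (∀ (f : MvPolynomial (Fin m) K), ∀ F, F ∈ W → contract f F ∈ W)

/-- The `R`-submodule of `𝒟` generated by a set. -/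
def DPspan (S : Set (DP m K)) : Set (DP m K) := ⋂₀ {W | IsDPSubmodule W ∧ S ⊆ W}

/-- The annihilator of a subset of `𝒟` in `R`. -/
def DPann (W : Set (DP m K)) : Set (MvPolynomial (Fin m) K) :=
  {f | ∀ F ∈ W, contract f F = 0}

/-- `n ∈ ℕ₊^d`. -/
def Pos {d : ℕ} (n : Fin d → ℕ) : Prop := ∀ i, 1 ≤ n i

/-- `n - eᵢ`. -/
def decE {d : ℕ} (n : Fin d → ℕ) (i : Fin d) : Fin d → ℕ :=
  Function.update n i (n i - 1)

/-- The common degree `s_n` of the generators `H n j`. -/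
def sdeg {m d τ : ℕ} {K : Type*} [Field K]
    (H : (Fin d → ℕ) → Fin τ → DP m K) (n : Fin d → ℕ) : ℕ :=
  Finset.univ.sup fun j => DPdeg (H n j)

/-- The submodule `W_n = ⟨H_n^j : j = 1,…,τ⟩` of `𝒟`. -/
def Wn {m d τ : ℕ} {K : Type*} [Field K]
    (H : (Fin d → ℕ) → Fin τ → DP m K) (n : Fin d → ℕ) : Set (DP m K) :=
  DPspan (Set.range (H n))

/-- `V_n^i`: the `K`-span of the dual monomials `Z₁^{k₁}⋯Z_m^{k_m}` with
`k_i ≤ n_i − 2` and `|k| ≤ s`. -/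
def Vni {m d : ℕ} {K : Type*} [Field K] (hdm : d ≤ m) (s : ℕ) (n : Fin d → ℕ)
    (i : Fin d) : Set (DP m K) :=
  {F | ∀ b ∈ F.support, b (Fin.castLE hdm i) ≤ n i - 2 ∧ mdeg b ≤ s}

/-- Condition (1) of `L_d^τ`-admissibility: for each `n`, the generators `H_n^j` have a
common degree `s_n` and their forms of degree `s_n` are linearly independent. -/
def Cond1 {m d τ : ℕ} {K : Type*} [Field K]
    (H : (Fin d → ℕ) → Fin τ → DP m K) : Prop :=
  ∀ n, Pos n → (∀ j, DPdeg (H n j) = sdeg H n) ∧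
    LinearIndependent K fun j => topForm (H n j)

/-- Condition (2) of `L_d^τ`-admissibility with respect to the sequence
`z_i = x_i`, `i = 1,…,d` (after a change of coordinates the general elements, resp.
the regular linear sequence, may be taken to be the first `d` variables, with
`𝒟 = K_DP[Z₁,…,Z_m]` in the dual coordinates):
`z_i ∘ H_n^j = H_{n−e_i}^j` if `n − e_i > 0`, and `0` otherwise. -/
def Cond2 {m d τ : ℕ} {K : Type*} [Field K] (hdm : d ≤ m)
    (H : (Fin d → ℕ) → Fin τ → DP m K) : Prop :=
  ∀ n, Pos n → ∀ (i : Fin d) (j : Fin τ),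
    contract (MvPolynomial.X (Fin.castLE hdm i)) (H n j) =
      if 2 ≤ n i then H (decE n i) j else 0

/-- Condition (3) of `L_d^τ`-admissibility: `W_n ∩ V_n^i ⊆ W_{n−e_i}`. -/
def Cond3 {m d τ : ℕ} {K : Type*} [Field K] (hdm : d ≤ m)
    (H : (Fin d → ℕ) → Fin τ → DP m K) : Prop :=
  ∀ n, Pos n → ∀ i : Fin d, 2 ≤ n i →
    Wn H n ∩ Vni hdm (sdeg H n) n i ⊆ Wn H (decE n i)

/-- The generating set `{H_n^j : j = 1,…,τ, n ∈ ℕ₊^d}`. -/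
def genSet {m d τ : ℕ} {K : Type*} [Field K]
    (H : (Fin d → ℕ) → Fin τ → DP m K) : Set (DP m K) :=
  {F | ∃ n j, Pos n ∧ F = H n j}

/-- The family `H` is an `L_d^τ`-admissible system of generators. -/
def IsLdAdmissibleSystem {m d τ : ℕ} {K : Type*} [Field K] (hdm : d ≤ m)
    (H : (Fin d → ℕ) → Fin τ → DP m K) : Prop :=
  Cond1 H ∧ Cond2 hdm H ∧ Cond3 hdm H

/-- The Gorenstein (`G_d`-admissibility) condition (b) of Elias–Rossi, for a family
`H' : ℕ₊^d → 𝒟`:  `ann_R⟨H_{n−e_i}⟩ ∘ H_n = ⟨H_{n−(n_i−1)e_i}⟩`. -/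
def CondB {m d : ℕ} {K : Type*} [Field K] (hdm : d ≤ m)
    (H' : (Fin d → ℕ) → DP m K) : Prop :=
  ∀ n, Pos n → ∀ i : Fin d, 2 ≤ n i →
    DPspan {G | ∃ f ∈ DPann (DPspan {H' (decE n i)}), G = contract f (H' n)} =
      DPspan {H' (Function.update n i 1)}

theorem contract_apply (f : MvPolynomial (Fin m) K) (F : DP m K) (p : Fin m →₀ ℕ) :
    (contract f F) p = ∑ a ∈ f.support, MvPolynomial.coeff a f * F (p + a) := by
  unfold contract
  rw [Finsupp.finset_sum_apply]
  refine Finset.sum_congr rfl fun a _ => ?_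
  rw [Finsupp.sum_apply]
  rw [Finsupp.sum]
  have : ∀ b ∈ F.support,
      (if a ≤ b then Finsupp.single (b - a) (MvPolynomial.coeff a f * F b) else 0) p
        = if b = p + a then MvPolynomial.coeff a f * F b else 0 := by
    intro b _
    split_ifs with h1 h2 h2
    · rw [h2, Finsupp.single_apply, if_pos]
      simp
    · rw [Finsupp.single_apply, if_neg]
      intro hba
      exact h2 (by rw [← hba, tsub_add_cancel_of_le h1])
    · exact absurd (h2 ▸ le_add_self) h1
    · simp
  rw [Finset.sum_congr rfl this, Finset.sum_ite_eq' F.support (p + a)]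
  split_ifs with h
  · rfl
  · rw [Finsupp.notMem_support_iff.mp h, mul_zero]
theorem contract_apply_superset {f : MvPolynomial (Fin m) K} {s : Finset (Fin m →₀ ℕ)}
    (hs : f.support ⊆ s) (F : DP m K) (p : Fin m →₀ ℕ) :
    (contract f F) p = ∑ a ∈ s, MvPolynomial.coeff a f * F (p + a) := by
  rw [contract_apply]
  exact Finset.sum_subset hs fun a _ ha => by
    rw [MvPolynomial.notMem_support_iff.mp ha, zero_mul]

theorem contract_monomial_apply (a : Fin m →₀ ℕ) (c : K) (F : DP m K) (p : Fin m →₀ ℕ) :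
    (contract (MvPolynomial.monomial a c) F) p = c * F (p + a) := by
  rw [contract_apply_superset (MvPolynomial.support_monomial_subset) F p,
    Finset.sum_singleton, MvPolynomial.coeff_monomial, if_pos rfl]

theorem contract_zero_left (F : DP m K) : contract (0 : MvPolynomial (Fin m) K) F = 0 := by
  ext p
  rw [contract_apply]
  simp

theorem contract_zero_right (f : MvPolynomial (Fin m) K) : contract f (0 : DP m K) = 0 := by
  ext p
  rw [contract_apply]
  simp

theorem contract_add_left (f g : MvPolynomial (Fin m) K) (F : DP m K) :
    contract (f + g) F = contract f F + contract g F := by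
  ext p
  have hf : f.support ⊆ f.support ∪ g.support ∪ (f + g).support := by
    intro a ha; exact Finset.mem_union_left _ (Finset.mem_union_left _ ha)
  have hg : g.support ⊆ f.support ∪ g.support ∪ (f + g).support := by
    intro a ha; exact Finset.mem_union_left _ (Finset.mem_union_right _ ha)
  have hfg : (f + g).support ⊆ f.support ∪ g.support ∪ (f + g).support :=
    Finset.subset_union_right
  rw [Finsupp.add_apply, contract_apply_superset hf, contract_apply_superset hg,
    contract_apply_superset hfg, ← Finset.sum_add_distrib]
  refine Finset.sum_congr rfl fun a _ => ?_
  rw [MvPolynomial.coeff_add, add_mul]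

theorem contract_add_right (f : MvPolynomial (Fin m) K) (F G : DP m K) :
    contract f (F + G) = contract f F + contract f G := by
  ext p
  rw [Finsupp.add_apply, contract_apply, contract_apply, contract_apply,
    ← Finset.sum_add_distrib]
  refine Finset.sum_congr rfl fun a _ => ?_
  rw [Finsupp.add_apply, mul_add]

theorem contract_sub_right (f : MvPolynomial (Fin m) K) (F G : DP m K) :
    contract f (F - G) = contract f F - contract f G := by
  ext p
  rw [Finsupp.sub_apply, contract_apply, contract_apply, contract_apply,
    ← Finset.sum_sub_distrib]
  refine Finset.sum_congr rfl fun a _ => ?_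
  rw [Finsupp.sub_apply, mul_sub]

theorem contract_contract (f g : MvPolynomial (Fin m) K) (F : DP m K) :
    contract (f * g) F = contract f (contract g F) := by
  induction f using MvPolynomial.induction_on' with
  | add p q hp hq => rw [add_mul, contract_add_left, contract_add_left, hp, hq]
  | monomial a c =>
    induction g using MvPolynomial.induction_on' with
    | add p q hp hq =>
      rw [mul_add, contract_add_left, hp, hq, contract_add_left, contract_add_right]
    | monomial b x =>
      rw [MvPolynomial.monomial_mul]
      ext p
      rw [contract_monomial_apply, contract_monomial_apply, contract_monomial_apply,
        mul_assoc, add_assoc]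

theorem contract_one (F : DP m K) : contract (1 : MvPolynomial (Fin m) K) F = F := by
  ext p
  have : (1 : MvPolynomial (Fin m) K) = MvPolynomial.monomial 0 1 := by
    simp [MvPolynomial.monomial_zero']
  rw [this, contract_monomial_apply, one_mul, add_zero]

theorem contract_C (c : K) (F : DP m K) : contract (MvPolynomial.C c) F = c • F := by
  ext p
  rw [MvPolynomial.C_apply, contract_monomial_apply, add_zero, Finsupp.smul_apply,
    smul_eq_mul]
/-- The cyclic `R`-submodule generated by `G` under contraction. -/
def cset (G : DP m K) : Set (DP m K) := {F | ∃ f, F = contract f G}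

theorem cset_isDPSubmodule (G : DP m K) : IsDPSubmodule (cset G) := by
  refine ⟨⟨0, (contract_zero_left G).symm⟩, ?_, ?_, ?_⟩
  · rintro _ _ ⟨f, rfl⟩ ⟨g, rfl⟩
    exact ⟨f + g, (contract_add_left f g G).symm⟩
  · rintro c _ ⟨f, rfl⟩
    exact ⟨MvPolynomial.C c * f, by rw [contract_contract, contract_C]⟩
  · rintro g _ ⟨f, rfl⟩
    exact ⟨g * f, (contract_contract g f G).symm⟩

theorem mem_cset_self (G : DP m K) : G ∈ cset G := ⟨1, (contract_one G).symm⟩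

theorem subset_DPspan (S : Set (DP m K)) : S ⊆ DPspan S := by
  intro x hx
  intro W hW
  exact hW.2 hx

theorem DPspan_le {S W : Set (DP m K)} (hW : IsDPSubmodule W) (hSW : S ⊆ W) :
    DPspan S ⊆ W := Set.sInter_subset_of_mem ⟨hW, hSW⟩

theorem DPspan_mono {S T : Set (DP m K)} (h : S ⊆ T) : DPspan S ⊆ DPspan T := by
  intro x hx W hW
  exact hx W ⟨hW.1, h.trans hW.2⟩

theorem DPspan_singleton (G : DP m K) : DPspan {G} = cset G := by
  apply Set.Subset.antisymm
  · exact DPspan_le (cset_isDPSubmodule G) (by simp [mem_cset_self])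
  · rintro _ ⟨f, rfl⟩ W hW
    exact hW.1.2.2.2 f G (hW.2 rfl)

theorem mem_DPspan_singleton {G F : DP m K} : F ∈ DPspan {G} ↔ ∃ f, F = contract f G := by
  rw [DPspan_singleton]; rfl

theorem mem_DPann_span_singleton {G : DP m K} {f : MvPolynomial (Fin m) K} :
    f ∈ DPann (DPspan {G}) ↔ contract f G = 0 := by
  constructor
  · intro h
    exact h G (subset_DPspan _ rfl)
  · intro h F hF
    obtain ⟨g, rfl⟩ := mem_DPspan_singleton.mp hF
    rw [← contract_contract, mul_comm, contract_contract, h, contract_zero_right]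
theorem mdeg_add (p a : Fin m →₀ ℕ) : mdeg (p + a) = mdeg p + mdeg a := by
  unfold mdeg
  exact Finsupp.sum_add_index' (fun _ => rfl) (fun _ _ _ => rfl)

theorem mdeg_le_DPdeg_of_contract {f : MvPolynomial (Fin m) K} {F : DP m K}
    {p : Fin m →₀ ℕ} (hp : p ∈ (contract f F).support) : mdeg p ≤ DPdeg F := by
  have h := Finsupp.mem_support_iff.mp hp
  rw [contract_apply] at h
  obtain ⟨a, -, ha⟩ := Finset.exists_ne_zero_of_sum_ne_zero h
  have hFa : F (p + a) ≠ 0 := fun h0 => ha (by rw [h0, mul_zero])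
  have : p + a ∈ F.support := Finsupp.mem_support_iff.mpr hFa
  calc mdeg p ≤ mdeg (p + a) := by rw [mdeg_add]; exact Nat.le_add_right _ _
    _ ≤ DPdeg F := Finset.le_sup this

theorem contract_X_pow_apply (i : Fin m) (k : ℕ) (F : DP m K) (p : Fin m →₀ ℕ) :
    (contract (MvPolynomial.X i ^ k) F) p = F (p + Finsupp.single i k) := by
  rw [MvPolynomial.X_pow_eq_monomial, contract_monomial_apply, one_mul]

theorem contract_X_pow_eq_zero_iff {i : Fin m} {k : ℕ} {F : DP m K} :
    contract (MvPolynomial.X i ^ k) F = 0 ↔ ∀ b ∈ F.support, b i < k := by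
  constructor
  · intro h b hb
    by_contra hlt
    push_neg at hlt
    have hc := congrArg (fun G : DP m K => G (b - Finsupp.single i k)) h
    simp only [contract_X_pow_apply, Finsupp.coe_zero, Pi.zero_apply] at hc
    have hb' : b - Finsupp.single i k + Finsupp.single i k = b := by
      ext j
      rw [Finsupp.add_apply, Finsupp.tsub_apply, Finsupp.single_apply]
      by_cases hji : i = j
      · subst hji; simp only [if_pos rfl, if_true]
        omega
      · simp [hji]
    rw [hb'] at hc
    exact Finsupp.mem_support_iff.mp hb hc
  · intro h
    ext p
    rw [contract_X_pow_apply, Finsupp.coe_zero, Pi.zero_apply]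
    by_contra hne
    have := h _ (Finsupp.mem_support_iff.mpr hne)
    rw [Finsupp.add_apply, Finsupp.single_apply, if_pos rfl] at this
    omega
section Cond2Lemmas

variable {d : ℕ} (hdm : d ≤ m) (H' : (Fin d → ℕ) → DP m K)

theorem pos_decE {n : Fin d → ℕ} {i : Fin d} (hn : Pos n) (h2i : 2 ≤ n i) :
    Pos (decE n i) := by
  intro j
  unfold decE
  rw [Function.update_apply]
  split_ifs with h
  · omega
  · exact hn j

theorem pos_update_one {n : Fin d → ℕ} (hn : Pos n) (i : Fin d) :
    Pos (Function.update n i 1) := by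
  intro j
  rw [Function.update_apply]
  split_ifs with h
  · omega
  · exact hn j

variable (hc2 : Cond2 hdm (fun n (_ : Fin 1) => H' n))
include hc2

theorem contract_X_H {n : Fin d → ℕ} (hn : Pos n) (i : Fin d) :
    contract (MvPolynomial.X (Fin.castLE hdm i)) (H' n) =
      if 2 ≤ n i then H' (decE n i) else 0 :=
  hc2 n hn i 0

theorem contract_X_pow_H {k : ℕ} {n : Fin d → ℕ} {i : Fin d} (hn : Pos n)
    (hk : k + 1 ≤ n i) :
    contract (MvPolynomial.X (Fin.castLE hdm i) ^ k) (H' n) =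
      H' (Function.update n i (n i - k)) := by
  induction k generalizing n with
  | zero =>
    rw [pow_zero, contract_one, Nat.sub_zero, Function.update_eq_self]
  | succ k ih =>
    have h2i : 2 ≤ n i := by omega
    rw [pow_succ, contract_contract, contract_X_H hdm H' hc2 hn i, if_pos h2i]
    have hdpos : Pos (decE n i) := pos_decE hn h2i
    have hki : k + 1 ≤ decE n i i := by
      unfold decE; rw [Function.update_self]; omega
    rw [ih hdpos hki]
    unfold decE
    rw [Function.update_idem, Function.update_self]
    have h : n i - 1 - k = n i - (k + 1) := by omega
    rw [h]

theorem H_update_from_decE {n : Fin d → ℕ} {i : Fin d} (hn : Pos n) (h2i : 2 ≤ n i) :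
    contract (MvPolynomial.X (Fin.castLE hdm i) ^ (n i - 2)) (H' (decE n i)) =
      H' (Function.update n i 1) := by
  have hd : Pos (decE n i) := pos_decE hn h2i
  have hk : (n i - 2) + 1 ≤ decE n i i := by
    unfold decE; rw [Function.update_self]; omega
  rw [contract_X_pow_H hdm H' hc2 hd hk]
  unfold decE
  rw [Function.update_idem, Function.update_self]
  have h : n i - 1 - (n i - 2) = 1 := by omega
  rw [h]

theorem contract_X_pow_H_ann {n : Fin d → ℕ} {i : Fin d} (hn : Pos n) (h2i : 2 ≤ n i) :
    contract (MvPolynomial.X (Fin.castLE hdm i) ^ (n i - 1)) (H' (decE n i)) = 0 := by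
  have h1 : n i - 1 = (n i - 2) + 1 := by omega
  rw [h1, pow_succ', contract_contract, H_update_from_decE hdm H' hc2 hn h2i,
    contract_X_H hdm H' hc2 (pos_update_one hn i) i, if_neg]
  rw [Function.update_self]
  omega

theorem H_update_one_eq {n : Fin d → ℕ} {i : Fin d} (hn : Pos n) (h2i : 2 ≤ n i) :
    H' (Function.update n i 1) =
      contract (MvPolynomial.X (Fin.castLE hdm i) ^ (n i - 1)) (H' n) := by
  rw [contract_X_pow_H hdm H' hc2 hn (by omega)]
  have h : n i - (n i - 1) = 1 := by omega
  rw [h]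

/-- `⟨H'(update n i 1)⟩ ⊆ ⟨H'(decE n i)⟩`. -/
theorem span_update_one_le {n : Fin d → ℕ} {i : Fin d} (hn : Pos n) (h2i : 2 ≤ n i) :
    DPspan {H' (Function.update n i 1)} ⊆ DPspan {H' (decE n i)} := by
  apply DPspan_le (by rw [DPspan_singleton]; exact cset_isDPSubmodule _)
  intro x hx
  rw [Set.mem_singleton_iff] at hx
  subst hx
  rw [mem_DPspan_singleton]
  exact ⟨_, (H_update_from_decE hdm H' hc2 hn h2i).symm⟩

end Cond2Lemmas
theorem contract_sub_left (f g : MvPolynomial (Fin m) K) (F : DP m K) :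
    contract (f - g) F = contract f F - contract g F := by
  ext p
  have hf : f.support ⊆ f.support ∪ g.support ∪ (f - g).support := by
    intro a ha; exact Finset.mem_union_left _ (Finset.mem_union_left _ ha)
  have hg : g.support ⊆ f.support ∪ g.support ∪ (f - g).support := by
    intro a ha; exact Finset.mem_union_left _ (Finset.mem_union_right _ ha)
  have hfg : (f - g).support ⊆ f.support ∪ g.support ∪ (f - g).support :=
    Finset.subset_union_right
  rw [Finsupp.sub_apply, contract_apply_superset hf, contract_apply_superset hg,
    contract_apply_superset hfg, ← Finset.sum_sub_distrib]
  refine Finset.sum_congr rfl fun a _ => ?_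
  rw [MvPolynomial.coeff_sub, sub_mul]

section Main

variable {d : ℕ} (hdm : d ≤ m) (H' : (Fin d → ℕ) → DP m K)

theorem Wn_eq (n : Fin d → ℕ) : Wn (fun n (_ : Fin 1) => H' n) n = DPspan {H' n} := by
  unfold Wn
  show DPspan (Set.range fun _ : Fin 1 => H' n) = _
  rw [Set.range_const]

theorem sdeg_eq (n : Fin d → ℕ) :
    sdeg (fun n (_ : Fin 1) => H' n) n = DPdeg (H' n) := by
  unfold sdeg
  exact Finset.sup_const Finset.univ_nonempty _

variable (hc2 : Cond2 hdm (fun n (_ : Fin 1) => H' n))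
include hc2

theorem keyA (hc3 : Cond3 hdm (fun n (_ : Fin 1) => H' n)) :
    ∀ (k : ℕ) (n : Fin d → ℕ) (i : Fin d), Pos n → 2 ≤ n i → n i = k →
      ∀ F ∈ DPspan {H' n}, contract (MvPolynomial.X (Fin.castLE hdm i)) F = 0 →
        F ∈ DPspan {H' (Function.update n i 1)} := by
  intro k
  induction k using Nat.strong_induction_on with
  | _ k ih =>
  intro n i hn h2i hk F hF hXF
  have hstep : F ∈ DPspan {H' (decE n i)} := by
    have h3 := hc3 n hn i h2i
    rw [Wn_eq H' n, Wn_eq H' (decE n i), sdeg_eq H' n] at h3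
    apply h3
    refine ⟨hF, fun b hb => ⟨?_, ?_⟩⟩
    · have hz : ∀ b ∈ F.support, b (Fin.castLE hdm i) < 1 := by
        rw [← contract_X_pow_eq_zero_iff, pow_one]
        exact hXF
      have := hz b hb
      omega
    · obtain ⟨f, rfl⟩ := mem_DPspan_singleton.mp hF
      exact mdeg_le_DPdeg_of_contract hb
  by_cases h2 : n i = 2
  · have : Function.update n i 1 = decE n i := by
      unfold decE
      have h : n i - 1 = 1 := by omega
      rw [h]
    rw [this]
    exact hstep
  · have hd : Pos (decE n i) := pos_decE hn h2i
    have h2d : 2 ≤ decE n i i := by unfold decE; rw [Function.update_self]; omega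
    have hlt : decE n i i < k := by unfold decE; rw [Function.update_self]; omega
    have := ih (decE n i i) hlt (decE n i) i hd h2d rfl F hstep hXF
    have hupd : Function.update (decE n i) i 1 = Function.update n i 1 := by
      unfold decE; rw [Function.update_idem]
    rwa [hupd] at this

theorem keyB1 (hcB : CondB hdm H') {n : Fin d → ℕ} {i : Fin d} (hn : Pos n)
    (h2i : 2 ≤ n i) {F : DP m K} (hF : F ∈ DPspan {H' n})
    (hXF : contract (MvPolynomial.X (Fin.castLE hdm i)) F = 0) :
    F ∈ DPspan {H' (decE n i)} := by
  obtain ⟨f, rfl⟩ := mem_DPspan_singleton.mp hF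
  have hann : contract f (H' (decE n i)) = 0 := by
    have hc := contract_X_H hdm H' hc2 hn i
    rw [if_pos h2i] at hc
    rw [← hc, ← contract_contract, mul_comm, contract_contract, hXF]
  have hmem : contract f (H' n) ∈
      {G | ∃ g ∈ DPann (DPspan {H' (decE n i)}), G = contract g (H' n)} :=
    ⟨f, mem_DPann_span_singleton.mpr hann, rfl⟩
  have h := subset_DPspan _ hmem
  rw [hcB n hn i h2i] at h
  exact span_update_one_le hdm H' hc2 hn h2i h

theorem keyB (hcB : CondB hdm H') :
    ∀ (k : ℕ) (n : Fin d → ℕ) (i : Fin d), Pos n → k + 1 ≤ n i →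
      ∀ F ∈ DPspan {H' n}, contract (MvPolynomial.X (Fin.castLE hdm i) ^ k) F = 0 →
        F ∈ DPspan {H' (decE n i)} := by
  intro k
  induction k with
  | zero =>
    intro n i hn hk F hF hXF
    rw [pow_zero, contract_one] at hXF
    subst hXF
    rw [DPspan_singleton]
    exact (cset_isDPSubmodule _).1
  | succ k ih =>
    intro n i hn hk F hF hXF
    by_cases hk0 : k = 0
    · subst hk0
      rw [pow_one] at hXF
      exact keyB1 hdm H' hc2 hcB hn (by omega) hF hXF
    have h2i : 2 ≤ n i := by omega
    have h3i : 3 ≤ n i := by omega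
    obtain ⟨f, rfl⟩ := mem_DPspan_singleton.mp hF
    set F0 := H' n with hF0
    set G := contract (MvPolynomial.X (Fin.castLE hdm i)) (contract f F0) with hGdef
    have hG : G = contract f (H' (decE n i)) := by
      rw [hGdef, ← contract_contract, mul_comm, contract_contract,
        contract_X_H hdm H' hc2 hn i, if_pos h2i]
    have hGspan : G ∈ DPspan {H' (decE n i)} := mem_DPspan_singleton.mpr ⟨f, hG⟩
    have hXkG : contract (MvPolynomial.X (Fin.castLE hdm i) ^ k) G = 0 := by
      rw [hGdef, ← contract_contract, ← pow_succ, hXF]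
    have hd : Pos (decE n i) := pos_decE hn h2i
    have hkd : k + 1 ≤ decE n i i := by unfold decE; rw [Function.update_self]; omega
    have hG2 := ih (decE n i) i hd hkd G hGspan hXkG
    -- identify H' (decE (decE n i) i) with contract (X^2) (H' n)
    have hX2 : contract (MvPolynomial.X (Fin.castLE hdm i) ^ 2) F0 =
        H' (decE (decE n i) i) := by
      rw [hF0, contract_X_pow_H hdm H' hc2 hn (by omega)]
      unfold decE
      rw [Function.update_idem, Function.update_self]
      have h : n i - 1 - 1 = n i - 2 := by omega
      rw [h]
    obtain ⟨g, hg⟩ := mem_DPspan_singleton.mp hG2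
    have hGeq : G = contract (MvPolynomial.X (Fin.castLE hdm i))
        (contract (g * MvPolynomial.X (Fin.castLE hdm i)) F0) := by
      rw [← contract_contract]
      have : MvPolynomial.X (Fin.castLE hdm i) * (g * MvPolynomial.X (Fin.castLE hdm i))
          = g * MvPolynomial.X (Fin.castLE hdm i) ^ 2 := by ring
      rw [this, contract_contract, hX2, ← hg]
    set F' := contract f F0 - contract (g * MvPolynomial.X (Fin.castLE hdm i)) F0 with hF'
    have hXF' : contract (MvPolynomial.X (Fin.castLE hdm i)) F' = 0 := by
      rw [hF', contract_sub_right, ← hGdef, ← hGeq, sub_self]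
    have hF'span : F' ∈ DPspan {H' n} := by
      rw [mem_DPspan_singleton]
      exact ⟨f - g * MvPolynomial.X (Fin.castLE hdm i), (contract_sub_left _ _ _).symm⟩
    have h1 := keyB1 hdm H' hc2 hcB hn h2i hF'span hXF'
    have h2 : contract (g * MvPolynomial.X (Fin.castLE hdm i)) F0 ∈
        DPspan {H' (decE n i)} := by
      rw [mem_DPspan_singleton]
      refine ⟨g, ?_⟩
      rw [contract_contract, contract_X_H hdm H' hc2 hn i, if_pos h2i]
    have : contract f F0 = F' + contract (g * MvPolynomial.X (Fin.castLE hdm i)) F0 := by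
      rw [hF', sub_add_cancel]
    rw [this]
    rw [DPspan_singleton] at h1 h2 ⊢
    exact (cset_isDPSubmodule _).2.1 _ _ h1 h2

end Main
/-- Discussion 4.10. An `R`-submodule `W` of `𝒟` is
`L_d^1`-admissible if and only if it is `G_d`-admissible: for `τ = 1`, given
conditions (1) (which for `τ = 1` just says each `H_n` is nonzero) and (2),
condition (3) of `L_d^1`-admissibility is equivalent to the `G_d` condition
`ann_R⟨H_{n−e_i}⟩ ∘ H_n = ⟨H_{n−(n_i−1)e_i}⟩` for all `i` and `n − e_i > 0`. -/
theorem L1_admissible_iff_Gd_admissible {m d : ℕ} {K : Type*} [Field K]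
    (hdm : d ≤ m) (H' : (Fin d → ℕ) → DP m K)
    (h1 : Cond1 (fun n (_ : Fin 1) => H' n))
    (h2 : Cond2 hdm (fun n (_ : Fin 1) => H' n)) :
    Cond3 hdm (fun n (_ : Fin 1) => H' n) ↔ CondB hdm H' := by
  constructor
  · intro hc3 n hn i h2i
    apply Set.Subset.antisymm
    · apply DPspan_le (by rw [DPspan_singleton]; exact cset_isDPSubmodule _)
      rintro G ⟨f, hfann, rfl⟩
      have hann := mem_DPann_span_singleton.mp hfann
      have hc := contract_X_H hdm H' h2 hn i
      rw [if_pos h2i] at hc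
      have hXF : contract (MvPolynomial.X (Fin.castLE hdm i))
          (contract f (H' n)) = 0 := by
        rw [← contract_contract, mul_comm, contract_contract, hc, hann]
      exact keyA hdm H' h2 hc3 (n i) n i hn h2i rfl (contract f (H' n))
        (mem_DPspan_singleton.mpr ⟨f, rfl⟩) hXF
    · apply DPspan_mono
      intro x hx
      rw [Set.mem_singleton_iff] at hx
      subst hx
      exact ⟨MvPolynomial.X (Fin.castLE hdm i) ^ (n i - 1),
        mem_DPann_span_singleton.mpr (contract_X_pow_H_ann hdm H' h2 hn h2i),
        H_update_one_eq hdm H' h2 hn h2i⟩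
  · intro hcB n hn i h2i F hF
    obtain ⟨hFW, hFV⟩ := hF
    rw [Wn_eq] at hFW
    rw [Wn_eq]
    have hX : contract (MvPolynomial.X (Fin.castLE hdm i) ^ (n i - 1)) F = 0 := by
      rw [contract_X_pow_eq_zero_iff]
      intro b hb
      have := (hFV b hb).1
      omega
    exact keyB hdm H' h2 hcB (n i - 1) n i hn (by omega) F hFW hX
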